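/- (i) There exists x that is LP̃-feasible if and only if there exists x such that (x, 0) is Phase-I-feasible. (ii) Every Phase-I-feasible (x, t) satisfies t ≤ 0. (iii) If (x, 0) is Phase-I-feasible and exactly n + 1 of the Phase I constraints hold with equality at (x, 0), then x is LP̃-feasible and exactly n of the LP̃ constraints hold with equality at x. -/

import Mathlib

noncomputable section
open scoped Classical
open Finset

variable {G' : Type*} [AddCommGroup G'] [LinearOrder G'] [IsOrderedAddMonoid G']

/-- The two sides `(larger side, smaller side)` of each of the `m + n + 1` constraints of
the program `LP̃`: for each `i`, `(⊔_j (A⁺ i j + x j)) ⊔ b⁺ i ⊔ d i ≥ (⊔_j (A⁻ i j + x j)) ⊔ b⁻ i`;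
`u ≥ ⊔_j x j`; and for each `j`, `x j ≥ l j`. -/
def lpSides {m n : ℕ} (Ap An : Matrix (Fin m) (Fin n) (WithBot G'))
    (bp bn d : Fin m → WithBot G') (u : WithBot G') (l : Fin n → WithBot G')
    (x : Fin n → WithBot G') :
    Fin m ⊕ (Fin n ⊕ Fin 1) → WithBot G' × WithBot G'
  | Sum.inl i =>
      ((univ.sup fun j => Ap i j + x j) ⊔ bp i ⊔ d i,
       (univ.sup fun j => An i j + x j) ⊔ bn i)
  | Sum.inr (Sum.inl j) => (x j, l j)
  | Sum.inr (Sum.inr _) => (u, univ.sup fun j => x j)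

/-- The two sides `(larger side, smaller side)` of each of the `m + n + 3` constraints of
the Phase I program: for each `i`,
`(⊔_j (A⁺ i j + x j)) ⊔ (b⁺ i + t) ⊔ d i ≥ (⊔_j (A⁻ i j + x j)) ⊔ (b⁻ i + t)`;
`u + t ≥ ⊔_j x j`; for each `j`, `x j ≥ l j`; `0 ≥ t`; and `t ≥ l'`. -/
def phaseISides {m n : ℕ} (Ap An : Matrix (Fin m) (Fin n) (WithBot G'))
    (bp bn d : Fin m → WithBot G') (u : WithBot G') (l : Fin n → WithBot G')
    (l' : WithBot G') (x : Fin n → WithBot G') (t : WithBot G') :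
    Fin m ⊕ (Fin n ⊕ Fin 3) → WithBot G' × WithBot G'
  | Sum.inl i =>
      ((univ.sup fun j => Ap i j + x j) ⊔ (bp i + t) ⊔ d i,
       (univ.sup fun j => An i j + x j) ⊔ (bn i + t))
  | Sum.inr (Sum.inl j) => (x j, l j)
  | Sum.inr (Sum.inr ⟨0, _⟩) => (u + t, univ.sup fun j => x j)
  | Sum.inr (Sum.inr ⟨1, _⟩) => (0, t)
  | Sum.inr (Sum.inr ⟨2, _⟩) => (t, l')

/-- A point is feasible for a family of two-sided constraints when at each index the smaller
side is below the larger side. -/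
def Feasible {ι : Type*} (sides : ι → WithBot G' × WithBot G') : Prop :=
  ∀ idx, (sides idx).2 ≤ (sides idx).1

/-- The number of constraints holding with equality. -/
def eqCount {ι : Type*} [Fintype ι] (sides : ι → WithBot G' × WithBot G') : ℕ :=
  (univ.filter (fun idx => (sides idx).1 = (sides idx).2)).card

private lemma card_filter_sum_split {α β : Type*} [Fintype α] [Fintype β]
    (p : α ⊕ β → Prop) [DecidablePred p] :
    (univ.filter p).card =
      (univ.filter fun a => p (Sum.inl a)).card + (univ.filter fun b => p (Sum.inr b)).card := by
  rw [← Finset.univ_disjSum_univ, ← Finset.card_disjSum]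
  congr 1; ext y; cases y <;> simp

private lemma card_filter_fin3 (p : Fin 3 → Prop) [DecidablePred p] :
    (univ.filter p).card =
      (if p 0 then 1 else 0) + (if p 1 then 1 else 0) + (if p 2 then 1 else 0) := by
  rw [Finset.card_filter, Fin.sum_univ_three]

private lemma card_filter_fin1 (p : Fin 1 → Prop) [DecidablePred p] :
    (univ.filter p).card = if p 0 then 1 else 0 := by
  rw [Finset.card_filter, Fin.sum_univ_one]

/-- (i) `LP̃` is feasible iff some `(x, 0)` is Phase-I-feasible;
(ii) every Phase-I-feasible `(x, t)` has `t ≤ 0`; (iii) if `(x, 0)` is Phase-I-feasible and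
exactly `n + 1` Phase I constraints are active there, then `x` is `LP̃`-feasible with exactly
`n` active constraints. -/
theorem phaseI_correctness (m n : ℕ)
    (Ap An : Matrix (Fin m) (Fin n) (WithBot G'))
    (bp bn d : Fin m → WithBot G') (u : WithBot G') (l : Fin n → WithBot G')
    (l' : WithBot G') (hl' : l' < 0) :
    ((∃ x, Feasible (lpSides Ap An bp bn d u l x)) ↔
      (∃ x, Feasible (phaseISides Ap An bp bn d u l l' x 0))) ∧
    (∀ x t, Feasible (phaseISides Ap An bp bn d u l l' x t) → t ≤ 0) ∧
    (∀ x, Feasible (phaseISides Ap An bp bn d u l l' x 0) →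
      eqCount (phaseISides Ap An bp bn d u l l' x 0) = n + 1 →
      Feasible (lpSides Ap An bp bn d u l x) ∧
        eqCount (lpSides Ap An bp bn d u l x) = n) := by
  -- sides agree at t = 0
  have keyi : ∀ x (i : Fin m), phaseISides Ap An bp bn d u l l' x 0 (Sum.inl i)
      = lpSides Ap An bp bn d u l x (Sum.inl i) := by
    intro x i; simp [phaseISides, lpSides]
  have keyj : ∀ x (j : Fin n), phaseISides Ap An bp bn d u l l' x 0 (Sum.inr (Sum.inl j))
      = lpSides Ap An bp bn d u l x (Sum.inr (Sum.inl j)) := by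
    intro x j; rfl
  have keyu : ∀ x, phaseISides Ap An bp bn d u l l' x 0 (Sum.inr (Sum.inr 0))
      = lpSides Ap An bp bn d u l x (Sum.inr (Sum.inr 0)) := by
    intro x; simp [phaseISides, lpSides]
  have key1 : ∀ x, phaseISides Ap An bp bn d u l l' x (0 : WithBot G') (Sum.inr (Sum.inr 1))
      = ((0 : WithBot G'), (0 : WithBot G')) := by
    intro x; rfl
  have key2 : ∀ x, phaseISides Ap An bp bn d u l l' x (0 : WithBot G') (Sum.inr (Sum.inr 2))
      = ((0 : WithBot G'), l') := by
    intro x; rfl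
  have feas_of : ∀ x, Feasible (phaseISides Ap An bp bn d u l l' x 0) →
      Feasible (lpSides Ap An bp bn d u l x) := by
    intro x h idx
    rcases idx with i | j | k
    · rw [← keyi x i]; exact h (Sum.inl i)
    · rw [← keyj x j]; exact h (Sum.inr (Sum.inl j))
    · have := h (Sum.inr (Sum.inr 0))
      rw [keyu x] at this
      have hk : k = 0 := Subsingleton.elim _ _
      rw [hk]; exact this
  refine ⟨⟨?_, ?_⟩, ?_, ?_⟩
  · rintro ⟨x, hx⟩
    refine ⟨x, fun idx => ?_⟩
    rcases idx with i | j | k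
    · rw [keyi x i]; exact hx (Sum.inl i)
    · rw [keyj x j]; exact hx (Sum.inr (Sum.inl j))
    · fin_cases k
      · have h0 := hx (Sum.inr (Sum.inr 0))
        rw [← keyu x] at h0
        exact h0
      · exact le_rfl
      · exact hl'.le
  · rintro ⟨x, hx⟩; exact ⟨x, feas_of x hx⟩
  · intro x t h
    exact h (Sum.inr (Sum.inr 1))
  · intro x h hcount
    refine ⟨feas_of x h, ?_⟩
    have hP : eqCount (phaseISides Ap An bp bn d u l l' x 0)
        = eqCount (lpSides Ap An bp bn d u l x) + 1 := by
      unfold eqCount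
      simp only [card_filter_sum_split, card_filter_fin3, card_filter_fin1,
        keyi, keyj, keyu, key1, key2]
      rw [if_pos trivial, if_neg hl'.ne']
      ring
    omega


end
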